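/- The graph T is 3/2-tough, that is, every separating set S of T satisfies |S| ≥ (3/2) · c(T − S). -/

import Mathlib

open Finset

/-- The number of connected components of `G − S`. -/
noncomputable def numComponents {V : Type*} (G : SimpleGraph V) (S : Set V) : ℕ :=
  Nat.card (G.induce Sᶜ).ConnectedComponent

/-- A graph `G` is `t`-tough if for every set `S` of vertices whose removal
disconnects the graph, one has `|S| ≥ t · c(G − S)`. -/
def IsTough {V : Type*} (t : ℝ) (G : SimpleGraph V) : Prop :=
  ∀ S : Set V, ¬ (G.induce Sᶜ).Connected → t * (numComponents G S : ℝ) ≤ (S.ncard : ℝ)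

/-- The graph `T` on nine vertices: `0,1,2` are the outer vertices `o₁,o₂,o₃`,
`3,4,5` are `g₁,g₂,g₃` and `6,7,8` are `w₁,w₂,w₃`. -/
def TGraph : SimpleGraph (Fin 9) :=
  SimpleGraph.fromRel fun a b =>
    (a, b) ∈ ([(0,1),(0,2),(1,2),(3,4),(3,5),(4,5),
      (3,0),(3,1),(4,1),(4,2),(5,2),(5,0),
      (6,0),(6,1),(6,3),(7,1),(7,2),(7,4),
      (8,2),(8,0),(8,5)] : List (Fin 9 × Fin 9))

instance : DecidableRel TGraph.Adj := fun a b => by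
  unfold TGraph; rw [SimpleGraph.fromRel_adj]; infer_instance

/-! ### Bitmask reachability machinery -/

/-- adjacency masks of `TGraph`. -/
def adjMask : Fin 9 → ℕ := ![366, 221, 435, 115, 174, 285, 11, 22, 37]

lemma adjMask_iff (u v : Fin 9) : (adjMask u).testBit v.val ↔ TGraph.Adj u v := by
  revert u v; decide

/-- mask of all neighbours of the vertex set `s`. -/
def nbrsM (s : ℕ) : ℕ :=
  (List.finRange 9).foldr (fun u acc => if s.testBit u.val then adjMask u ||| acc else acc) 0

lemma adjMask_lt (w : Fin 9) : adjMask w < 512 := by revert w; decide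

lemma testBit_foldr (l : List (Fin 9)) (s : ℕ) (v : ℕ) :
    (l.foldr (fun u acc => if s.testBit u.val then adjMask u ||| acc else acc) 0).testBit v ↔
      ∃ u ∈ l, s.testBit u.val ∧ (adjMask u).testBit v := by
  induction l with
  | nil => simp
  | cons a l ih =>
      simp only [List.foldr_cons, List.mem_cons]
      by_cases h : s.testBit a.val
      · rw [if_pos h, Nat.testBit_or, Bool.or_eq_true, ih]
        constructor
        · rintro (h1 | ⟨u, hu, h2, h3⟩)
          · exact ⟨a, Or.inl rfl, h, h1⟩
          · exact ⟨u, Or.inr hu, h2, h3⟩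
        · rintro ⟨u, (rfl | hu), h2, h3⟩
          · exact Or.inl h3
          · exact Or.inr ⟨u, hu, h2, h3⟩
      · rw [if_neg h, ih]
        constructor
        · rintro ⟨u, hu, h2, h3⟩; exact ⟨u, Or.inr hu, h2, h3⟩
        · rintro ⟨u, (rfl | hu), h2, h3⟩
          · exact absurd h2 h
          · exact ⟨u, hu, h2, h3⟩

lemma testBit_nbrsM (s : ℕ) (v : ℕ) :
    (nbrsM s).testBit v ↔ ∃ u : Fin 9, s.testBit u.val ∧ (adjMask u).testBit v := by
  rw [nbrsM, testBit_foldr]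
  simp [List.mem_finRange]

/-- one step of reachability, within the allowed set `A`. -/
def stepM (A s : ℕ) : ℕ := s ||| (nbrsM s &&& A)

/-- vertices reachable from `u` staying inside the allowed mask `A`. -/
def reachM (A : ℕ) (u : Fin 9) : ℕ := (stepM A)^[9] (2 ^ u.val)

/-- the allowed vertex set corresponding to a mask. -/
def PM (A : ℕ) : Set (Fin 9) := fun v => A.testBit v.val

instance (A : ℕ) : DecidablePred (· ∈ PM A) := fun v =>
  inferInstanceAs (Decidable (A.testBit v.val = true))

lemma testBit_stepM {A s : ℕ} {v : ℕ} :
    (stepM A s).testBit v ↔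
      s.testBit v ∨ ((nbrsM s).testBit v ∧ A.testBit v) := by
  rw [stepM, Nat.testBit_or, Bool.or_eq_true, Nat.testBit_and, Bool.and_eq_true]

def MaskLE (s t : ℕ) : Prop := ∀ v : ℕ, s.testBit v → t.testBit v

lemma stepM_mono {A s t : ℕ} (h : MaskLE s t) : MaskLE (stepM A s) (stepM A t) := by
  intro v hv
  rw [testBit_stepM] at hv ⊢
  rcases hv with hv | ⟨hn, hA⟩
  · exact Or.inl (h v hv)
  · refine Or.inr ⟨?_, hA⟩
    rw [testBit_nbrsM] at hn ⊢
    obtain ⟨u, hu, h2⟩ := hn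
    exact ⟨u, h _ hu, h2⟩

lemma iterate_stepM_mono {A s t : ℕ} (h : MaskLE s t) (n : ℕ) :
    MaskLE ((stepM A)^[n] s) ((stepM A)^[n] t) := by
  induction n generalizing s t with
  | zero => exact h
  | succ n ih =>
      rw [Function.iterate_succ_apply, Function.iterate_succ_apply]
      exact ih (stepM_mono h)

lemma le_iterate_stepM (A s : ℕ) (n : ℕ) : MaskLE s ((stepM A)^[n] s) := by
  induction n with
  | zero => exact fun _ h => h
  | succ n ih =>
      rw [Function.iterate_succ_apply']
      exact fun v hv => testBit_stepM.mpr (Or.inl (ih v hv))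

lemma iterate_stepM_le {A s : ℕ} {m n : ℕ} (h : m ≤ n) :
    MaskLE ((stepM A)^[m] s) ((stepM A)^[n] s) := by
  obtain ⟨k, rfl⟩ := Nat.exists_eq_add_of_le h
  rw [Nat.add_comm, Function.iterate_add_apply]
  exact le_iterate_stepM A _ k

lemma reachable_of_iterate {A : ℕ} {u : Fin 9} (hu : u ∈ PM A) (n : ℕ) :
    ∀ v : Fin 9, ((stepM A)^[n] (2 ^ u.val)).testBit v.val →
      ∃ hv : v ∈ PM A, (TGraph.induce (PM A)).Reachable ⟨u, hu⟩ ⟨v, hv⟩ := by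
  induction n with
  | zero =>
      intro v hv
      simp only [Function.iterate_zero, id_eq, Nat.testBit_two_pow,
        decide_eq_true_eq] at hv
      have : u = v := Fin.ext hv
      subst this
      exact ⟨hu, SimpleGraph.Reachable.refl _⟩
  | succ n ih =>
      intro v hv
      rw [Function.iterate_succ_apply', testBit_stepM] at hv
      rcases hv with hv | ⟨hn, hvA⟩
      · exact ih v hv
      · rw [testBit_nbrsM] at hn
        obtain ⟨w, hw1, hw2⟩ := hn
        obtain ⟨hwA, hr⟩ := ih w hw1
        have hvA' : v ∈ PM A := hvA
        have hadj : (TGraph.induce (PM A)).Adj ⟨w, hwA⟩ ⟨v, hvA'⟩ :=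
          (adjMask_iff w v).mp hw2
        exact ⟨hvA', hr.trans hadj.reachable⟩

lemma iterate_of_walk {A : ℕ} {x y : ↥(PM A)}
    (p : (TGraph.induce (PM A)).Walk x y) :
    ((stepM A)^[p.length] (2 ^ (x : Fin 9).val)).testBit (y : Fin 9).val := by
  induction p with
  | nil => simp [Nat.testBit_two_pow]
  | @cons a b c h p ih =>
      have h1 : MaskLE (2 ^ (b : Fin 9).val) (stepM A (2 ^ (a : Fin 9).val)) := by
        intro v hv
        simp only [Nat.testBit_two_pow, decide_eq_true_eq] at hv
        subst hv
        refine testBit_stepM.mpr (Or.inr ⟨?_, b.2⟩)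
        rw [testBit_nbrsM]
        exact ⟨(a : Fin 9), Nat.testBit_two_pow_self, (adjMask_iff _ _).mpr h⟩
      have h2 := iterate_stepM_mono h1 p.length _ ih
      rw [← Function.iterate_succ_apply] at h2
      simpa using h2

lemma mem_reachM_iff {A : ℕ} {u v : Fin 9} (hu : u ∈ PM A) (hv : v ∈ PM A) :
    (reachM A u).testBit v.val ↔
      (TGraph.induce (PM A)).Reachable ⟨u, hu⟩ ⟨v, hv⟩ := by
  constructor
  · intro h
    obtain ⟨hv', hr⟩ := reachable_of_iterate hu 9 v h
    exact hr
  · intro h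
    refine h.elim_path fun p => ?_
    have hlen : p.1.length < 9 := by
      have h3 := p.2.length_lt
      have hcard : Fintype.card (PM A) ≤ 9 := by
        have h4 := Fintype.card_le_of_injective (Subtype.val : PM A → Fin 9)
          Subtype.val_injective
        simpa using h4
      omega
    exact iterate_stepM_le (le_of_lt hlen) v.val (iterate_of_walk p.1)

lemma reachM_mem_PM {A : ℕ} {u v : Fin 9} (hu : u ∈ PM A)
    (h : (reachM A u).testBit v.val) : v ∈ PM A :=
  (reachable_of_iterate hu 9 v h).1

/-! ### Connectivity and component count via masks -/

lemma and_eq_left_iff {A r : ℕ} : A &&& r = A ↔ ∀ v : ℕ, A.testBit v → r.testBit v := by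
  constructor
  · intro h v hv
    have h2 : (A &&& r).testBit v = A.testBit v := by rw [h]
    rw [Nat.testBit_and, hv, Bool.true_and] at h2
    exact h2
  · intro h
    apply Nat.eq_of_testBit_eq
    intro i
    rw [Nat.testBit_and]
    by_cases hi : A.testBit i
    · rw [hi, h i hi]; rfl
    · simp [hi]

lemma minCond_iff {r : ℕ} {v : Fin 9} (hr : ∀ u : ℕ, r.testBit u → u < 9) :
    r &&& (2 ^ v.val - 1) = 0 ↔ ∀ u : Fin 9, r.testBit u.val → v ≤ u := by
  constructor
  · intro h u hu
    by_contra hlt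
    push_neg at hlt
    have h2 : (r &&& (2 ^ v.val - 1)).testBit u.val = true := by
      rw [Nat.testBit_and, hu, Nat.testBit_two_pow_sub_one, Bool.true_and,
        decide_eq_true_eq]
      exact hlt
    rw [h] at h2
    simp at h2
  · intro h
    apply Nat.eq_of_testBit_eq
    intro i
    rw [Nat.testBit_and, Nat.zero_testBit]
    by_cases hi : r.testBit i
    · have hi9 : i < 9 := hr i hi
      have h6 := h ⟨i, hi9⟩ hi
      rw [Fin.le_def] at h6
      have h7 : (v : ℕ) ≤ i := h6
      clear h6
      rw [hi, Nat.testBit_two_pow_sub_one, Bool.true_and, decide_eq_false]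
      omega
    · simp [hi]

lemma reachM_bits_lt {A : ℕ} {u : Fin 9} : ∀ v : ℕ, (reachM A u).testBit v → v < 9 := by
  have key : ∀ (n : ℕ) (s : ℕ), (∀ v : ℕ, s.testBit v → v < 9) →
      ∀ v : ℕ, ((stepM A)^[n] s).testBit v → v < 9 := by
    intro n
    induction n with
    | zero => intro s hs v hv; exact hs v hv
    | succ n ih =>
        intro s hs v hv
        rw [Function.iterate_succ_apply', testBit_stepM] at hv
        rcases hv with hv | ⟨hn, _⟩
        · exact ih s hs v hv
        · rw [testBit_nbrsM] at hn
          obtain ⟨w, _, h2⟩ := hn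
          by_contra h9
          push_neg at h9
          have hlt : adjMask w < 2 ^ v :=
            lt_of_lt_of_le (adjMask_lt w)
              (Nat.pow_le_pow_right (show 0 < 2 by norm_num) h9)
          rw [Nat.testBit_lt_two_pow hlt] at h2
          exact absurd h2 (by simp)
  intro v hv
  refine key 9 _ ?_ v hv
  intro w hw
  simp only [Nat.testBit_two_pow, decide_eq_true_eq] at hw
  omega

def connM (A : ℕ) : Prop :=
  (∃ u : Fin 9, A.testBit u.val) ∧
    ∀ u : Fin 9, A.testBit u.val → A &&& reachM A u = A

instance (A : ℕ) : Decidable (connM A) := by unfold connM; infer_instance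

lemma connM_iff (A : ℕ) (hA : A < 512) : (TGraph.induce (PM A)).Connected ↔ connM A := by
  rw [SimpleGraph.connected_iff]
  constructor
  · rintro ⟨hp, ⟨x⟩⟩
    refine ⟨⟨x, x.2⟩, fun u hu => and_eq_left_iff.mpr fun v hv => ?_⟩
    by_cases hv9 : v < 9
    · exact (mem_reachM_iff hu (show (⟨v, hv9⟩ : Fin 9) ∈ PM A from hv)).mpr
        (hp ⟨u, hu⟩ ⟨⟨v, hv9⟩, hv⟩)
    · exfalso
      have hlt : A < 2 ^ v := lt_of_lt_of_le hA (by
        calc (512:ℕ) = 2 ^ 9 := by norm_num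
        _ ≤ 2 ^ v := Nat.pow_le_pow_right (by norm_num) (by omega))
      rw [Nat.testBit_lt_two_pow hlt] at hv
      exact absurd hv (by simp)
  · rintro ⟨⟨x, hx⟩, hr⟩
    refine ⟨fun a b => ?_, ⟨⟨x, hx⟩⟩⟩
    have h2 := and_eq_left_iff.mp (hr a.1 a.2) b.1.val b.2
    have := (mem_reachM_iff a.2 b.2).mp h2
    simpa using this

/-- the number of connected components, computed via masks: count minimal
vertices of components. -/
def compM (A : ℕ) : ℕ :=
  (univ.filter fun v : Fin 9 => A.testBit v.val ∧
    reachM A v &&& (2 ^ v.val - 1) = 0).card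

lemma mem_compM_filter {A : ℕ} {v : Fin 9} :
    (v ∈ univ.filter fun v : Fin 9 => A.testBit v.val ∧
      reachM A v &&& (2 ^ v.val - 1) = 0) ↔
    (A.testBit v.val ∧ ∀ u : Fin 9, (reachM A v).testBit u.val → v ≤ u) := by
  rw [mem_filter, minCond_iff reachM_bits_lt]
  simp

lemma compM_eq (A : ℕ) : compM A = Nat.card (TGraph.induce (PM A)).ConnectedComponent := by
  classical
  have hbij : Function.Bijective
      (fun v : (univ.filter fun v : Fin 9 => A.testBit v.val ∧
          reachM A v &&& (2 ^ v.val - 1) = 0) =>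
        (TGraph.induce (PM A)).connectedComponentMk
          ⟨v.1, (mem_compM_filter.mp v.2).1⟩) := by
    constructor
    · rintro ⟨v, hv⟩ ⟨w, hw⟩ h
      simp only [SimpleGraph.ConnectedComponent.eq] at h
      have hv' := mem_compM_filter.mp hv
      have hw' := mem_compM_filter.mp hw
      have h1 : v ≤ w := hv'.2 w ((mem_reachM_iff hv'.1 hw'.1).mpr h)
      have h2 : w ≤ v := hw'.2 v ((mem_reachM_iff hw'.1 hv'.1).mpr h.symm)
      exact Subtype.ext (le_antisymm h1 h2)
    · intro c
      refine c.ind fun x => ?_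
      set R : Finset (Fin 9) :=
        univ.filter (fun u : Fin 9 => (reachM A (x : Fin 9)).testBit u.val) with hR
      have hxR : (x : Fin 9) ∈ R := by
        rw [hR, mem_filter]
        exact ⟨mem_univ _, le_iterate_stepM A _ 9 _ Nat.testBit_two_pow_self⟩
      have hRne : R.Nonempty := ⟨_, hxR⟩
      set m := R.min' hRne with hm
      have hmR : m ∈ R := R.min'_mem hRne
      have hmreach : (reachM A (x : Fin 9)).testBit m.val := (mem_filter.mp hmR).2
      have hmA : m ∈ PM A := reachM_mem_PM x.2 hmreach
      have hxm : (TGraph.induce (PM A)).Reachable ⟨(x : Fin 9), x.2⟩ ⟨m, hmA⟩ :=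
        (mem_reachM_iff x.2 hmA).mp hmreach
      have hmem : m ∈ univ.filter fun v : Fin 9 => A.testBit v.val ∧
          reachM A v &&& (2 ^ v.val - 1) = 0 := by
        rw [mem_compM_filter]
        refine ⟨hmA, fun u hu => ?_⟩
        have huA : u ∈ PM A := reachM_mem_PM hmA hu
        have h5 : (TGraph.induce (PM A)).Reachable ⟨(x : Fin 9), x.2⟩ ⟨u, huA⟩ :=
          hxm.trans ((mem_reachM_iff hmA huA).mp hu)
        have huR : u ∈ R := by
          rw [hR, mem_filter]
          exact ⟨mem_univ _, (mem_reachM_iff x.2 huA).mpr h5⟩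
        exact R.min'_le u huR
      refine ⟨⟨m, hmem⟩, ?_⟩
      have : (⟨(x : Fin 9), x.2⟩ : ↥(PM A)) = x := rfl
      rw [← this]
      exact SimpleGraph.ConnectedComponent.sound hxm.symm
  rw [compM, ← Nat.card_eq_of_bijective _ hbij, Nat.card_eq_fintype_card,
    Fintype.card_coe]

/-! ### Encoding a set as a mask -/

def maskOf (T : Set (Fin 9)) [DecidablePred (· ∈ T)] : ℕ :=
  (List.finRange 9).foldr (fun u acc => if u ∈ T then 2 ^ u.val ||| acc else acc) 0

lemma testBit_maskOf (T : Set (Fin 9)) [DecidablePred (· ∈ T)] (v : ℕ) :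
    (maskOf T).testBit v ↔ ∃ u : Fin 9, u ∈ T ∧ u.val = v := by
  rw [maskOf]
  have : ∀ l : List (Fin 9),
      ((l.foldr (fun u acc => if u ∈ T then 2 ^ u.val ||| acc else acc) 0).testBit v ↔
        ∃ u ∈ l, u ∈ T ∧ u.val = v) := by
    intro l
    induction l with
    | nil => simp
    | cons a l ih =>
        simp only [List.foldr_cons, List.mem_cons]
        by_cases h : a ∈ T
        · rw [if_pos h, Nat.testBit_or, Bool.or_eq_true, ih]
          constructor
          · rintro (h1 | ⟨u, hu, h2, h3⟩)
            · simp only [Nat.testBit_two_pow, decide_eq_true_eq] at h1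
              exact ⟨a, Or.inl rfl, h, h1⟩
            · exact ⟨u, Or.inr hu, h2, h3⟩
          · rintro ⟨u, (rfl | hu), h2, h3⟩
            · exact Or.inl (by simp [Nat.testBit_two_pow, h3])
            · exact Or.inr ⟨u, hu, h2, h3⟩
        · rw [if_neg h, ih]
          constructor
          · rintro ⟨u, hu, h2, h3⟩; exact ⟨u, Or.inr hu, h2, h3⟩
          · rintro ⟨u, (rfl | hu), h2, h3⟩
            · exact absurd h2 h
            · exact ⟨u, hu, h2, h3⟩
  rw [this]
  simp [List.mem_finRange]

lemma maskOf_lt (T : Set (Fin 9)) [DecidablePred (· ∈ T)] : maskOf T < 512 := by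
  rw [maskOf]
  have : ∀ l : List (Fin 9),
      (l.foldr (fun u acc => if u ∈ T then 2 ^ u.val ||| acc else acc) 0) < 512 := by
    intro l
    induction l with
    | nil => norm_num
    | cons a l ih =>
        simp only [List.foldr_cons]
        by_cases h : a ∈ T
        · rw [if_pos h]
          have h1 : (2 : ℕ) ^ a.val < 512 := by
            calc (2:ℕ) ^ a.val < 2 ^ 9 :=
              Nat.pow_lt_pow_right (by norm_num) a.isLt
            _ = 512 := by norm_num
          exact Nat.or_lt_two_pow (n := 9) h1 ih
        · rw [if_neg h]; exact ih
  exact this _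

lemma PM_maskOf (T : Set (Fin 9)) [DecidablePred (· ∈ T)] : PM (maskOf T) = T := by
  ext v
  show (maskOf T).testBit v.val = true ↔ v ∈ T
  rw [testBit_maskOf]
  constructor
  · rintro ⟨u, hu, h⟩
    rwa [← Fin.ext h]
  · intro h
    exact ⟨v, h, rfl⟩

/-! ### The finite check -/

def cntS (A : ℕ) : ℕ := (univ.filter fun v : Fin 9 => ¬ A.testBit v.val).card

set_option maxRecDepth 100000 in
set_option maxHeartbeats 4000000 in
lemma key : ∀ a < 512, ¬ connM a → 3 * compM a ≤ 2 * cntS a := by decide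

/-- The graph `T` is `3/2`-tough. -/
theorem TGraph_is_three_halves_tough : IsTough (3 / 2) TGraph := by
  classical
  intro S hS
  set A := maskOf Sᶜ with hAdef
  have hPM : PM A = Sᶜ := PM_maskOf Sᶜ
  have hA : A < 512 := maskOf_lt Sᶜ
  rw [← hPM] at hS
  have hc : ¬ connM A := fun h => hS ((connM_iff A hA).mpr h)
  have hkey := key A hA hc
  have hcomp : numComponents TGraph S = compM A := by
    rw [numComponents, ← hPM, compM_eq]
  have hcard : S.ncard = cntS A := by
    have hSeq : S = ↑(univ.filter fun v : Fin 9 => ¬ A.testBit v.val) := by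
      ext v
      simp only [Finset.coe_filter, Set.mem_setOf_eq, mem_univ, true_and]
      constructor
      · intro hv
        intro hbit
        have : v ∈ PM A := hbit
        rw [hPM] at this
        exact this hv
      · intro hbit
        by_contra hv
        have : v ∈ Sᶜ := hv
        rw [← hPM] at this
        exact hbit this
    rw [hSeq, Set.ncard_coe_finset, cntS]
  rw [hcomp, hcard]
  have hcast : (3 * compM A : ℝ) ≤ (2 * cntS A : ℝ) := by
    exact_mod_cast hkey
  push_cast at hcast ⊢
  linarith
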